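/- Fix d = 2 and the half-orthant environment on ℤ². Let 𝔠 be the cluster of the origin in the triangular-lattice oriented site percolation on half sites (occupied = half site, oriented connections in directions −e₁, +e₂, −e₁+e₂ within the quadrant {x : x^{[1]} ≤ 0, x^{[2]} ≥ 0}), defined by: 𝔠₀ = {0} if 0 is a half site (and 𝔠 = {0} if 0 is full); 𝔠_n = {x in the quadrant with ‖x‖₁ = n : x is a half site and ({x+e₁, x−e₂} ∩ 𝔠_{n−1} ≠ ∅ or x+e₁−e₂ ∈ 𝔠_{n−2})}; 𝔠 = ∪_n 𝔠_n. If 𝔠 is finite, then there exists a path from the origin 0 to −e₁, consistent with the environment, of length at most 4·|𝔠|. -/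

import Mathlib

/-- In the half-orthant model (d = 2), the step `s` is allowed from site `y`:
`+e₁` and `+e₂` are always allowed; `-e₁` and `-e₂` are allowed only from
full (non-half) sites. -/
def allowedHO (half : ℤ × ℤ → Prop) (y s : ℤ × ℤ) : Prop :=
  s = (1, 0) ∨ s = (0, 1) ∨ (¬ half y ∧ (s = (-1, 0) ∨ s = (0, -1)))

/-- Cluster levels defined by recursion from a half-site predicate. -/
def CL (h : ℤ × ℤ → Prop) : ℕ → Set (ℤ × ℤ)
  | 0 => {(0, 0)}
  | (n + 1) => {x : ℤ × ℤ | x.1 ≤ 0 ∧ 0 ≤ x.2 ∧ x.1.natAbs + x.2.natAbs = (n+1) ∧ h x ∧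
        ((x + (1, 0) ∈ CL h n ∨ x - (0, 1) ∈ CL h n) ∨
          (2 ≤ n + 1 ∧ x + (1, 0) - (0, 1) ∈ CL h (n + 1 - 2)))}
  decreasing_by all_goals omega

lemma CL_spec (h : ℤ × ℤ → Prop) (n : ℕ) (hn : 1 ≤ n) : CL h n =
    {x : ℤ × ℤ | x.1 ≤ 0 ∧ 0 ≤ x.2 ∧ x.1.natAbs + x.2.natAbs = n ∧ h x ∧
        ((x + (1, 0) ∈ CL h (n - 1) ∨ x - (0, 1) ∈ CL h (n - 1)) ∨
          (2 ≤ n ∧ x + (1, 0) - (0, 1) ∈ CL h (n - 2)))} := by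
  match n, hn with
  | (m + 1), _ => rw [CL]; rfl

/-- Transfer a chain along an implication that may use membership of the endpoints. -/
lemma chain'_imp_mem {α : Type*} {R S : α → α → Prop} :
    ∀ (l : List α), List.Chain' R l →
      (∀ a b, a ∈ l → b ∈ l → R a b → S a b) → List.Chain' S l := by
  intro l
  induction l with
  | nil => intro _ _; exact List.isChain_nil
  | cons a t ih =>
    intro hc hm
    rw [List.Chain', List.isChain_cons] at hc ⊢
    refine ⟨fun b hb => hm a b (by simp) (by simp [List.mem_of_mem_head? hb]) (hc.1 b hb),
      ih hc.2 fun x y hx hy => hm x y (by simp [hx]) (by simp [hy])⟩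

/-- decomposition at first occurrence -/
lemma first_occ {α : Type*} (x : α) :
    ∀ (l : List α), x ∈ l → ∃ s t, l = s ++ x :: t ∧ x ∉ s := by
  intro l
  induction l with
  | nil => simp
  | cons a t ih =>
    intro hx
    by_cases hax : x = a
    · exact ⟨[], t, by simp [hax], by simp⟩
    · obtain ⟨s, t', h1, h2⟩ := ih (by rcases List.mem_cons.1 hx with h | h; exact absurd h hax; exact h)
      exact ⟨a :: s, t', by simp [h1], by simp [hax, h2]⟩

/-- decomposition at last occurrence -/
lemma last_occ {α : Type*} (x : α) :
    ∀ (l : List α), x ∈ l → ∃ s t, l = s ++ x :: t ∧ x ∉ t := by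
  intro l
  induction l with
  | nil => simp
  | cons a t ih =>
    intro hx
    by_cases hxt : x ∈ t
    · obtain ⟨s, t', h1, h2⟩ := ih hxt
      exact ⟨a :: s, t', by simp [h1], h2⟩
    · have hax : x = a := by rcases List.mem_cons.1 hx with h | h; exact h; exact absurd h hxt
      exact ⟨[], t, by simp [hax], hxt⟩

lemma cut_lemma {α : Type*} (R : α → α → Prop) (x : α) (l : List α) (hc : List.Chain' R l) :
    ∃ l₁ l₂, (l₁ ++ l₂).head? = l.head? ∧ (l₁ ++ l₂).getLast? = l.getLast? ∧
      List.Chain' R (l₁ ++ l₂) ∧ (l₁ ++ l₂).length ≤ l.length ∧ x ∉ l₁ ∧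
      (l₂ = [] ∨ ∃ t, l₂ = x :: t ∧ x ∉ t) := by
  by_cases hx : x ∈ l
  · obtain ⟨l₁, l₅, hl, hxl₁⟩ := first_occ x l hx
    obtain ⟨l₃, t, hl₂, hxt⟩ := last_occ x (x :: l₅) (by simp)
    refine ⟨l₁, x :: t, ?_, ?_, ?_, ?_, hxl₁, Or.inr ⟨t, rfl, hxt⟩⟩
    · cases l₁ <;> simp [hl]
    · rw [List.getLast?_append_of_ne_nil l₁ (by simp), hl,
        List.getLast?_append_of_ne_nil l₁ (by simp), hl₂,
        List.getLast?_append_of_ne_nil l₃ (by simp)]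
    · rw [List.Chain', List.isChain_append]
      have h1 : List.Chain' R (l₁ ++ [x]) := by
        refine hc.prefix ?_
        rw [hl]; exact ⟨l₅, by simp⟩
      have h2 : List.Chain' R (x :: t) := by
        refine hc.suffix ?_
        rw [hl]
        exact List.IsSuffix.trans ⟨l₃, hl₂.symm⟩ (List.suffix_append l₁ (x :: l₅))
      rw [List.Chain', List.isChain_append] at h1
      refine ⟨h1.1, h2, fun a ha b hb => ?_⟩
      simp only [List.head?_cons, Option.mem_some_iff] at hb
      exact hb ▸ h1.2.2 a ha x (by simp)
    · have : l₅.length = l₃.length + t.length := by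
        have := congrArg List.length hl₂; simp at this; omega
      simp [hl]; omega
  · exact ⟨l, [], by simp, by simp, by simpa using hc, by simp, hx, Or.inl rfl⟩

section

variable (half : ℤ × ℤ → Prop) (x : ℤ × ℤ)

/-- The modified environment where `x` is promoted to a full site. -/
def promote : ℤ × ℤ → Prop := fun y => half y ∧ y ≠ x

lemma allowed_promote {y s : ℤ × ℤ} (hy : y ≠ x) (h : allowedHO (promote half x) y s) :
    allowedHO half y s := by
  rcases h with h | h | ⟨h1, h2⟩
  · exact Or.inl h
  · exact Or.inr (Or.inl h)
  · exact Or.inr (Or.inr ⟨fun hh => h1 ⟨hh, hy⟩, h2⟩)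

lemma chain_promote (l : List (ℤ × ℤ)) (hx : x ∉ l)
    (hc : List.Chain' (fun a b => allowedHO (promote half x) a (b - a)) l) :
    List.Chain' (fun a b => allowedHO half a (b - a)) l :=
  chain'_imp_mem l hc fun a _ ha _ h => allowed_promote half x (fun e => hx (e ▸ ha)) h

/-- Surgery: a path consistent with the promoted environment can be modified to a
path consistent with the original environment at the cost of at most 4 extra steps. -/
lemma surgery (hx1 : ¬ half (x + (0, 1))) (hx2 : ¬ half (x + (-1, 1)))
    (hx3 : ¬ half (x + (-1, 0)))
    (l : List (ℤ × ℤ))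
    (hc : List.Chain' (fun a b => allowedHO (promote half x) a (b - a)) l) :
    ∃ m : List (ℤ × ℤ), m.head? = l.head? ∧ m.getLast? = l.getLast? ∧
      List.Chain' (fun a b => allowedHO half a (b - a)) m ∧ m.length ≤ l.length + 4 := by
  obtain ⟨l₁, l₂, hhead, hlast, hc', hlen, hxl₁, hl₂⟩ :=
    cut_lemma (fun a b => allowedHO (promote half x) a (b - a)) x l hc
  rcases hl₂ with rfl | ⟨t, rfl, hxt⟩
  · exact ⟨l₁ ++ [], hhead, hlast,
      chain_promote half x _ (by simpa using hxl₁) hc', by omega⟩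
  cases t with
  | nil =>
    refine ⟨l₁ ++ [x], hhead, hlast, ?_, by omega⟩
    rw [List.Chain', List.isChain_append] at hc' ⊢
    refine ⟨chain_promote half x _ hxl₁ hc'.1, List.isChain_singleton x, fun a ha b hb => ?_⟩
    have haa : a ∈ l₁ := List.mem_of_mem_getLast? ha
    simp only [List.head?_cons, Option.mem_some_iff] at hb
    subst hb
    exact allowed_promote half x (fun e => hxl₁ (e ▸ haa)) (hc'.2.2 a ha x (by simp))
  | cons h t' =>
    rw [List.Chain', List.isChain_append] at hc'
    have hstep : allowedHO (promote half x) x (h - x) := by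
      have := hc'.2.1
      rw [List.isChain_cons_cons] at this
      exact this.1
    have hcht : List.Chain' (fun a b => allowedHO (promote half x) a (b - a)) (h :: t') := by
      have := hc'.2.1; rw [List.isChain_cons_cons] at this; exact this.2
    have hs4 : h - x = (1, 0) ∨ h - x = (0, 1) ∨ h - x = (-1, 0) ∨ h - x = (0, -1) := by
      rcases hstep with h1 | h1 | ⟨_, h1 | h1⟩ <;> tauto
    have hhx : h ≠ x := by
      rcases hs4 with h1 | h1 | h1 | h1 <;>
        · intro e; rw [e, sub_self] at h1; exact absurd h1 (by simp [Prod.ext_iff])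
    have hcht' : List.Chain' (fun a b => allowedHO half a (b - a)) (h :: t') := by
      exact chain_promote half x _ hxt hcht
    have hch1 : List.Chain' (fun a b => allowedHO half a (b - a)) l₁ :=
      chain_promote half x _ hxl₁ hc'.1
    have hrel : ∀ a ∈ l₁.getLast?, allowedHO half a (x - a) := by
      intro a ha
      have haa : a ∈ l₁ := List.mem_of_mem_getLast? ha
      exact allowed_promote half x (fun e => hxl₁ (e ▸ haa)) (hc'.2.2 a ha x (by simp))
    -- detour list D depending on the direction of the step from x
    have key : ∃ D : List (ℤ × ℤ), D.length ≤ 4 ∧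
        List.Chain' (fun a b => allowedHO half a (b - a)) (x :: (D ++ h :: t')) := by
      rcases hs4 with h1 | h1 | h1 | h1
      · exact ⟨[], by simp, by simp only [List.nil_append]; rw [List.Chain', List.isChain_cons_cons]; exact ⟨Or.inl h1, hcht'⟩⟩
      · exact ⟨[], by simp, by simp only [List.nil_append]; rw [List.Chain', List.isChain_cons_cons]; exact ⟨Or.inr (Or.inl h1), hcht'⟩⟩
      · have hh : h = x + (-1, 0) := by
          have := sub_eq_iff_eq_add.mp h1; rw [this]; simp [Prod.ext_iff, add_comm]
        refine ⟨[x + (0, 1), x + (-1, 1)], by simp, ?_⟩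
        simp only [List.cons_append, List.nil_append]
        rw [List.Chain', List.isChain_cons_cons, List.isChain_cons_cons, List.isChain_cons_cons]
        refine ⟨?_, ?_, ?_, hcht'⟩
        · exact Or.inr (Or.inl (by simp [Prod.ext_iff]))
        · exact Or.inr (Or.inr ⟨hx1, Or.inl (by simp [Prod.ext_iff])⟩)
        · exact Or.inr (Or.inr ⟨hx2, Or.inr (by rw [hh]; simp [Prod.ext_iff])⟩)
      · have hh : h = x + (0, -1) := by
          have := sub_eq_iff_eq_add.mp h1; rw [this]; simp [Prod.ext_iff, add_comm]
        refine ⟨[x + (0, 1), x + (-1, 1), x + (-1, 0), x + (-1, -1)], by simp, ?_⟩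
        simp only [List.cons_append, List.nil_append]
        rw [List.Chain', List.isChain_cons_cons, List.isChain_cons_cons, List.isChain_cons_cons, List.isChain_cons_cons,
          List.isChain_cons_cons]
        refine ⟨?_, ?_, ?_, ?_, ?_, hcht'⟩
        · exact Or.inr (Or.inl (by simp [Prod.ext_iff]))
        · exact Or.inr (Or.inr ⟨hx1, Or.inl (by simp [Prod.ext_iff])⟩)
        · exact Or.inr (Or.inr ⟨hx2, Or.inr (by simp [Prod.ext_iff])⟩)
        · exact Or.inr (Or.inr ⟨hx3, Or.inr (by simp [Prod.ext_iff])⟩)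
        · exact Or.inl (by rw [hh]; simp [Prod.ext_iff])
    obtain ⟨D, hD4, hDch⟩ := key
    refine ⟨l₁ ++ x :: (D ++ h :: t'), ?_, ?_, ?_, ?_⟩
    · rw [← hhead]; cases l₁ <;> simp
    · rw [← hlast]
      rw [List.getLast?_append_of_ne_nil l₁ (by simp),
        List.getLast?_append_of_ne_nil l₁ (by simp)]
      show (x :: (D ++ h :: t')).getLast? = (x :: h :: t').getLast?
      rw [show x :: (D ++ h :: t') = (x :: D) ++ h :: t' by simp,
        List.getLast?_append_of_ne_nil (x :: D) (by simp),
        show (x :: h :: t') = [x] ++ h :: t' by simp,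
        List.getLast?_append_of_ne_nil [x] (by simp)]
    · rw [List.Chain', List.isChain_append]
      refine ⟨hch1, hDch, fun a ha b hb => ?_⟩
      simp only [List.head?_cons, Option.mem_some_iff] at hb
      subst hb
      exact hrel a ha
    · have : (l₁ ++ x :: h :: t').length ≤ l.length := hlen
      simp only [List.length_append, List.length_cons] at this ⊢
      omega

end

/-- Points in the cluster levels lie in the quadrant and have ℓ¹ norm `n`. -/
lemma level_norm (half : ℤ × ℤ → Prop) (C : ℕ → Set (ℤ × ℤ))
    (hC0 : C 0 = {(0, 0)})
    (hCn : half (0, 0) → ∀ n, 1 ≤ n → C n =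
      {x : ℤ × ℤ | x.1 ≤ 0 ∧ 0 ≤ x.2 ∧ x.1.natAbs + x.2.natAbs = n ∧ half x ∧
        ((x + (1, 0) ∈ C (n - 1) ∨ x - (0, 1) ∈ C (n - 1)) ∨
          (2 ≤ n ∧ x + (1, 0) - (0, 1) ∈ C (n - 2)))})
    (h00 : half (0, 0)) :
    ∀ n y, y ∈ C n → y.1 ≤ 0 ∧ 0 ≤ y.2 ∧ y.1.natAbs + y.2.natAbs = n ∧ half y := by
  intro n y hy
  match n with
  | 0 => rw [hC0] at hy; simp_all
  | (m+1) =>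
    rw [hCn h00 (m+1) (by omega)] at hy
    exact ⟨hy.1, hy.2.1, hy.2.2.1, hy.2.2.2.1⟩

/-- The key induction: by induction on a bound `N` of the cluster size. -/
lemma main_induction : ∀ (N : ℕ) (half : ℤ × ℤ → Prop) (C : ℕ → Set (ℤ × ℤ)),
    C 0 = {(0, 0)} →
    (¬ half (0, 0) → ∀ n, 1 ≤ n → C n = ∅) →
    (half (0, 0) → ∀ n, 1 ≤ n → C n =
      {x : ℤ × ℤ | x.1 ≤ 0 ∧ 0 ≤ x.2 ∧ x.1.natAbs + x.2.natAbs = n ∧ half x ∧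
        ((x + (1, 0) ∈ C (n - 1) ∨ x - (0, 1) ∈ C (n - 1)) ∨
          (2 ≤ n ∧ x + (1, 0) - (0, 1) ∈ C (n - 2)))}) →
    ∀ (hfin : (⋃ n, C n).Finite), hfin.toFinset.card ≤ N →
    ∃ l : List (ℤ × ℤ), l.head? = some (0, 0) ∧ l.getLast? = some (-1, 0) ∧
      List.Chain' (fun a b => allowedHO half a (b - a)) l ∧
      l.length ≤ 4 * hfin.toFinset.card + 1 := by
  intro N
  induction N with
  | zero =>
    intro half C hC0 hfull hCn hfin hcard
    exfalso
    have h0 : (0, 0) ∈ hfin.toFinset := by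
      rw [Set.Finite.mem_toFinset]
      exact Set.mem_iUnion.2 ⟨0, by rw [hC0]; rfl⟩
    have := Finset.card_pos.2 ⟨_, h0⟩
    omega
  | succ N ih =>
    intro half C hC0 hfull hCn hfin hcard
    have h0S : (0, 0) ∈ hfin.toFinset := by
      rw [Set.Finite.mem_toFinset]
      exact Set.mem_iUnion.2 ⟨0, by rw [hC0]; rfl⟩
    have hcard1 : 1 ≤ hfin.toFinset.card := Finset.card_pos.2 ⟨_, h0S⟩
    by_cases h00 : half (0, 0)
    · classical
      have hnorm := level_norm half C hC0 hCn h00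
      set B := hfin.toFinset.sup (fun y => y.1.natAbs + y.2.natAbs) with hB
      have hle : ∀ m, (C m).Nonempty → m ≤ B := by
        rintro m ⟨y, hy⟩
        have hyS : y ∈ hfin.toFinset := by
          rw [Set.Finite.mem_toFinset]; exact Set.mem_iUnion.2 ⟨m, hy⟩
        have h1 : y.1.natAbs + y.2.natAbs ≤ B :=
          Finset.le_sup (f := fun y : ℤ × ℤ => y.1.natAbs + y.2.natAbs) hyS
        have h2 := (hnorm m y hy).2.2.1
        omega
      set n := Nat.findGreatest (fun m => (C m).Nonempty) B with hn
      have hCnne : (C n).Nonempty := by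
        exact Nat.findGreatest_spec (P := fun m => (C m).Nonempty) (m := 0) (Nat.zero_le B)
          (by rw [hC0]; exact ⟨(0, 0), rfl⟩ : (C 0).Nonempty)
      have hempty : ∀ m, n < m → C m = ∅ := by
        intro m hm
        by_contra hne
        have hne' : (C m).Nonempty := Set.nonempty_iff_ne_empty.2 hne
        have := Nat.le_findGreatest (P := fun m => (C m).Nonempty) (hle m hne') hne'
        omega
      obtain ⟨x, hxCn⟩ := hCnne
      obtain ⟨hq1, hq2, hq3, hxhalf⟩ := hnorm n x hxCn
      by_cases hn0 : n = 0
      · -- the cluster is just the origin: direct path of length 3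
        rw [hn0] at hempty
        have hx1 : ¬ half (0, 1) := by
          intro hh
          have hmem : ((0 : ℤ), (1 : ℤ)) ∈ C 1 := by
            rw [hCn h00 1 le_rfl]
            refine ⟨by norm_num, by norm_num, by norm_num, hh, Or.inl (Or.inr ?_)⟩
            show ((0, 1) : ℤ × ℤ) - (0, 1) ∈ C 0
            rw [hC0]; simp [Prod.ext_iff]
          rw [hempty 1 (by omega)] at hmem; exact hmem
        have hx2 : ¬ half (-1, 1) := by
          intro hh
          have hmem : ((-1 : ℤ), (1 : ℤ)) ∈ C 2 := by
            rw [hCn h00 2 (by omega)]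
            refine ⟨by norm_num, by norm_num, by norm_num, hh, Or.inr ⟨le_rfl, ?_⟩⟩
            show ((-1, 1) : ℤ × ℤ) + (1, 0) - (0, 1) ∈ C 0
            rw [hC0]; simp [Prod.ext_iff]
          rw [hempty 2 (by omega)] at hmem; exact hmem
        refine ⟨[(0, 0), (0, 1), (-1, 1), (-1, 0)], rfl, by simp, ?_, by simp; omega⟩
        rw [List.Chain', List.isChain_cons_cons, List.isChain_cons_cons, List.isChain_cons_cons]
        exact ⟨Or.inr (Or.inl (by simp [Prod.ext_iff])),
          Or.inr (Or.inr ⟨hx1, Or.inl (by simp [Prod.ext_iff])⟩),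
          Or.inr (Or.inr ⟨hx2, Or.inr (by simp [Prod.ext_iff])⟩),
          List.isChain_singleton _⟩
      · -- promote an awesome point x of maximal level n ≥ 1
        have hn1 : 1 ≤ n := by omega
        have hxne0 : x ≠ (0, 0) := by
          intro e; rw [e] at hq3; simp at hq3; omega
        have hx1 : ¬ half (x + (0, 1)) := by
          intro hh
          have hmem : x + (0, 1) ∈ C (n + 1) := by
            rw [hCn h00 (n + 1) (by omega)]
            refine ⟨?_, ?_, ?_, hh, Or.inl (Or.inr ?_)⟩
            · show x.1 + 0 ≤ 0; omega
            · show (0 : ℤ) ≤ x.2 + 1; omega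
            · show (x.1 + 0).natAbs + (x.2 + 1).natAbs = n + 1; omega
            · show x + (0, 1) - (0, 1) ∈ C (n + 1 - 1)
              simpa [Nat.add_sub_cancel, add_sub_cancel_right] using hxCn
          rw [hempty (n + 1) (by omega)] at hmem; exact hmem
        have hx3 : ¬ half (x + (-1, 0)) := by
          intro hh
          have hmem : x + (-1, 0) ∈ C (n + 1) := by
            rw [hCn h00 (n + 1) (by omega)]
            refine ⟨?_, ?_, ?_, hh, Or.inl (Or.inl ?_)⟩
            · show x.1 + -1 ≤ 0; omega
            · show (0 : ℤ) ≤ x.2 + 0; omega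
            · show (x.1 + -1).natAbs + (x.2 + 0).natAbs = n + 1; omega
            · show x + (-1, 0) + (1, 0) ∈ C (n + 1 - 1)
              rw [show x + (-1, 0) + (1, 0) = x by simp [Prod.ext_iff], Nat.add_sub_cancel]
              exact hxCn
          rw [hempty (n + 1) (by omega)] at hmem; exact hmem
        have hx2 : ¬ half (x + (-1, 1)) := by
          intro hh
          have hmem : x + (-1, 1) ∈ C (n + 2) := by
            rw [hCn h00 (n + 2) (by omega)]
            refine ⟨?_, ?_, ?_, hh, Or.inr ⟨by omega, ?_⟩⟩
            · show x.1 + -1 ≤ 0; omega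
            · show (0 : ℤ) ≤ x.2 + 1; omega
            · show (x.1 + -1).natAbs + (x.2 + 1).natAbs = n + 2; omega
            · show x + (-1, 1) + (1, 0) - (0, 1) ∈ C (n + 2 - 2)
              rw [show x + (-1, 1) + (1, 0) - (0, 1) = x by simp [Prod.ext_iff],
                Nat.add_sub_cancel]
              exact hxCn
          rw [hempty (n + 2) (by omega)] at hmem; exact hmem
        set half' := promote half x with hhalf'
        have hA : ∀ m, CL half' m = C m \ {x} := by
          intro m
          induction m using Nat.strong_induction_on with
          | _ m ihm =>
            match m with
            | 0 =>
              have he : CL half' 0 = {((0 : ℤ), (0 : ℤ))} := by rw [CL]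
              rw [he, hC0, Set.diff_singleton_eq_self (by simpa using hxne0)]
            | (k + 1) =>
              rw [CL_spec half' (k + 1) (by omega), hCn h00 (k + 1) (by omega)]
              simp only [Nat.add_sub_cancel]
              rw [ihm k (by omega), ihm (k + 1 - 2) (by omega)]
              ext y
              simp only [Set.mem_setOf_eq, Set.mem_diff, Set.mem_singleton_iff, hhalf',
                promote]
              constructor
              · rintro ⟨q1, q2, q3, ⟨hy, hyx⟩, hp⟩
                refine ⟨⟨q1, q2, q3, hy, ?_⟩, hyx⟩
                rcases hp with (⟨h, _⟩ | ⟨h, _⟩) | ⟨h2k, h, _⟩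
                · exact Or.inl (Or.inl h)
                · exact Or.inl (Or.inr h)
                · exact Or.inr ⟨h2k, h⟩
              · rintro ⟨⟨q1, q2, q3, hy, hp⟩, hyx⟩
                have hymem : y ∈ C (k + 1) := by
                  rw [hCn h00 (k + 1) (by omega)]; exact ⟨q1, q2, q3, hy, hp⟩
                have hk1 : k + 1 ≤ n := by
                  by_contra hcon
                  rw [hempty (k + 1) (by omega)] at hymem
                  exact hymem
                have hxk : x ∉ C k := fun hc => by
                  have := (hnorm k x hc).2.2.1; omega
                have hxk2 : x ∉ C (k + 1 - 2) := fun hc => by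
                  have := (hnorm _ x hc).2.2.1; omega
                refine ⟨q1, q2, q3, ⟨hy, hyx⟩, ?_⟩
                rcases hp with (h | h) | ⟨h2k, h⟩
                · exact Or.inl (Or.inl ⟨h, fun e => hxk (e ▸ h)⟩)
                · exact Or.inl (Or.inr ⟨h, fun e => hxk (e ▸ h)⟩)
                · exact Or.inr ⟨h2k, h, fun e => hxk2 (e ▸ h)⟩
        have hU : (⋃ m, CL half' m) = (⋃ m, C m) \ {x} := by
          simp only [hA]; exact (Set.iUnion_diff _ _).symm
        have hfin' : (⋃ m, CL half' m).Finite := by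
          rw [hU]; exact hfin.diff
        have htf : hfin'.toFinset = hfin.toFinset.erase x := by
          ext y
          simp only [Set.Finite.mem_toFinset, Finset.mem_erase, hU, Set.mem_diff,
            Set.mem_singleton_iff]
          tauto
        have hxmem : x ∈ hfin.toFinset := by
          rw [Set.Finite.mem_toFinset]; exact Set.mem_iUnion.2 ⟨n, hxCn⟩
        have hcard' : hfin'.toFinset.card = hfin.toFinset.card - 1 := by
          rw [htf, Finset.card_erase_of_mem hxmem]
        obtain ⟨l, lhead, llast, lchain, llen⟩ :=
          ih half' (CL half') (by rw [CL])
            (fun hcon => absurd ⟨h00, fun e => hxne0 e.symm⟩ hcon)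
            (fun _ n hn => CL_spec half' n hn) hfin' (by omega)
        obtain ⟨m, mhead, mlast, mchain, mlen⟩ := surgery half x hx1 hx2 hx3 l lchain
        exact ⟨m, mhead.trans lhead, mlast.trans llast, mchain, by omega⟩
    · refine ⟨[(0, 0), (-1, 0)], rfl, by simp, ?_, by simp; omega⟩
      rw [List.Chain', List.isChain_cons_cons]
      exact ⟨Or.inr (Or.inr ⟨h00, Or.inl (by simp [Prod.ext_iff])⟩),
        List.isChain_singleton _⟩

theorem path_to_west (half : ℤ × ℤ → Prop) (C : ℕ → Set (ℤ × ℤ))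
    (hC0 : C 0 = {(0, 0)})
    (hfull : ¬ half (0, 0) → ∀ n, 1 ≤ n → C n = ∅)
    (hCn : half (0, 0) → ∀ n, 1 ≤ n → C n =
      {x : ℤ × ℤ | x.1 ≤ 0 ∧ 0 ≤ x.2 ∧ x.1.natAbs + x.2.natAbs = n ∧ half x ∧
        ((x + (1, 0) ∈ C (n - 1) ∨ x - (0, 1) ∈ C (n - 1)) ∨
          (2 ≤ n ∧ x + (1, 0) - (0, 1) ∈ C (n - 2)))})
    (hfin : (⋃ n, C n).Finite) :
    ∃ (L : ℕ) (γ : ℕ → ℤ × ℤ), L ≤ 4 * hfin.toFinset.card ∧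
      γ 0 = (0, 0) ∧ γ L = (-1, 0) ∧
      ∀ m < L, allowedHO half (γ m) (γ (m + 1) - γ m) := by
  obtain ⟨l, hhead, hlast, hchain, hlen⟩ :=
    main_induction hfin.toFinset.card half C hC0 hfull hCn hfin le_rfl
  have hne : l ≠ [] := by rintro rfl; simp at hhead
  have hpos : 0 < l.length := List.length_pos_iff.2 hne
  refine ⟨l.length - 1, fun m => l.getD m (0, 0), by omega, ?_, ?_, ?_⟩
  · have : l.head? = some (l.getD 0 (0, 0)) := by cases l with
      | nil => simp at hhead
      | cons a t => simp
    rw [this] at hhead; exact Option.some_injective _ hhead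
  · have h1 : l.getLast? = some (l.getLast hne) := List.getLast?_eq_getLast_of_ne_nil hne
    rw [h1] at hlast
    have h2 : l.getLast hne = l[l.length - 1]'(by omega) := List.getLast_eq_getElem hne
    show l.getD (l.length - 1) (0, 0) = (-1, 0)
    rw [List.getD_eq_getElem l _ (by omega)]
    rw [h2] at hlast
    exact Option.some_injective _ hlast
  · intro m hm
    show allowedHO half (l.getD m (0, 0)) (l.getD (m+1) (0, 0) - l.getD m (0, 0))
    rw [List.getD_eq_getElem l _ (by omega), List.getD_eq_getElem l _ (by omega)]
    have := List.isChain_iff_getElem.1 hchain m (by omega)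
    simpa [List.get_eq_getElem] using this
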